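/- Let G = (V,E) be a tree on V = {1,…,N} with N ≥ 2, let n ≥ 1, and let the target configuration q = (b_1,…,b_N) satisfy Σ_{i=1}^N b_i = 0 and b_i ≠ b_j for every edge (i,j) ∈ E. Let K = { p = (a_1,…,a_N) ∈ (ℝ^n)^N : Σ_{i=1}^N a_i = 0 and p is an equilibrium of the formation control system }. Then K (with its subspace topology) is homeomorphic to the product of N − 1 copies of the unit sphere S^{n−1} ⊂ ℝ^n. -/

import Mathlib

open Finset
open scoped RealInnerProductSpace Classical

/-- The decentralized control law `u_ij(p)`. -/
noncomputable def uCtrl {n N : ℕ} (b a : Fin N → EuclideanSpace ℝ (Fin n)) (i j : Fin N) : ℝ :=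
  if a j = a i then 0 else ⟪b j - b i, a j - a i⟫ / ‖a j - a i‖ ^ 2 - 1

/-- The quadratic Lyapunov function `Φ(p) = ∑ ‖a i - b i‖²`. -/
noncomputable def Phi {n N : ℕ} (b a : Fin N → EuclideanSpace ℝ (Fin n)) : ℝ :=
  ∑ i, ‖a i - b i‖ ^ 2

/-- Sum over each undirected edge of `G` exactly once. -/
noncomputable def edgeSum {N : ℕ} (G : SimpleGraph (Fin N)) (f : Fin N → Fin N → ℝ) : ℝ :=
  ∑ p ∈ Finset.univ.filter (fun p : Fin N × Fin N => p.1 < p.2 ∧ G.Adj p.1 p.2), f p.1 p.2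

/-- `p = a` is an equilibrium of the formation control system:
`∑_{j ∈ V_i} u_ij (p) • (a i - a j) = 0` for every vertex `i`. -/
noncomputable def IsEquilibrium {n N : ℕ} (G : SimpleGraph (Fin N))
    (b a : Fin N → EuclideanSpace ℝ (Fin n)) : Prop :=
  ∀ i, ∑ j ∈ Finset.univ.filter (fun j => G.Adj i j), uCtrl b a i j • (a i - a j) = 0

section Helpers
variable {n N : ℕ}
local notation "E" => EuclideanSpace ℝ (Fin n)

lemma uCtrl_symm (b a : Fin N → E) (i j : Fin N) : uCtrl b a j i = uCtrl b a i j := by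
  unfold uCtrl
  by_cases h : a j = a i
  · simp [h]
  · rw [if_neg h, if_neg (by exact fun h' => h h'.symm)]
    rw [show b i - b j = -(b j - b i) from (neg_sub _ _).symm,
        show a i - a j = -(a j - a i) from (neg_sub _ _).symm, inner_neg_neg, norm_neg]

lemma uCtrl_smul_eq_zero_iff (b a : Fin N → E) (i j : Fin N) :
    uCtrl b a i j • (a i - a j) = 0 ↔ ⟪b j - b i, a j - a i⟫ = ‖a j - a i‖ ^ 2 := by
  by_cases h : a j = a i
  · simp [uCtrl, h]
  · have hx : a i - a j ≠ 0 := sub_ne_zero.mpr (fun h' => h h'.symm)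
    have hn : ‖a j - a i‖ ^ 2 ≠ 0 := pow_ne_zero _ (norm_ne_zero_iff.mpr (sub_ne_zero.mpr h))
    rw [smul_eq_zero]
    simp only [uCtrl, if_neg h, hx, or_false, sub_eq_zero]
    rw [div_eq_one_iff_eq hn]

lemma edgeCond_symm (b a : Fin N → E) (i j : Fin N) :
    (⟪b j - b i, a j - a i⟫ = ‖a j - a i‖ ^ 2) ↔ (⟪b i - b j, a i - a j⟫ = ‖a i - a j‖ ^ 2) := by
  rw [show b i - b j = -(b j - b i) from (neg_sub _ _).symm,
      show a i - a j = -(a j - a i) from (neg_sub _ _).symm, inner_neg_neg, norm_neg]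

lemma sphere_cond (c x : E) : ⟪c, x⟫ = ‖x‖ ^ 2 ↔ ‖(2:ℝ) • x - c‖ = ‖c‖ := by
  have h : ‖(2:ℝ) • x - c‖ ^ 2 = ‖c‖ ^ 2 + 4 * (‖x‖ ^ 2 - ⟪c, x⟫) := by
    rw [norm_sub_sq_real, norm_smul, real_inner_smul_left, real_inner_comm]
    simp [abs_of_nonneg]
    ring
  constructor
  · intro hx
    have h2 : ‖(2:ℝ) • x - c‖ ^ 2 = ‖c‖ ^ 2 := by rw [h, hx]; ring
    nlinarith [norm_nonneg ((2:ℝ) • x - c), norm_nonneg c]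
  · intro hx
    have h2 : ‖(2:ℝ) • x - c‖ ^ 2 = ‖c‖ ^ 2 := by rw [hx]
    nlinarith [h2, h]

lemma equilibrium_iff (G : SimpleGraph (Fin N)) (b a : Fin N → E) :
    IsEquilibrium G b a ↔ ∀ i j, G.Adj i j → uCtrl b a i j • (a i - a j) = 0 := by
  constructor
  · intro h
    set u := uCtrl b a with hu
    set f : Fin N → Fin N → ℝ :=
      fun i j => if G.Adj i j then u i j * ⟪a i - b i, a i - a j⟫ else 0 with hf
    have hS : ∀ i, ∑ j, f i j = 0 := by
      intro i
      calc ∑ j, f i j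
          = ∑ j ∈ univ.filter (fun j => G.Adj i j), u i j * ⟪a i - b i, a i - a j⟫ :=
            (Finset.sum_filter _ _).symm
        _ = ⟪a i - b i, ∑ j ∈ univ.filter (fun j => G.Adj i j), u i j • (a i - a j)⟫ := by
            rw [inner_sum]
            exact Finset.sum_congr rfl fun j _ => (real_inner_smul_right _ _ _).symm
        _ = 0 := by rw [h i, inner_zero_right]
    have key : ∀ i j, f i j + f j i =
        -(if G.Adj i j then u i j ^ 2 * ‖a i - a j‖ ^ 2 else 0) := by
      intro i j
      by_cases hij : G.Adj i j
      · rw [hf]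
        simp only [if_pos hij, if_pos hij.symm]
        have husym : u j i = u i j := uCtrl_symm b a i j
        rw [husym]
        by_cases hx : a j = a i
        · have : u i j = 0 := by simp [hu, uCtrl, hx]
          simp [this, hx]
        · have hn : ‖a j - a i‖ ^ 2 ≠ 0 :=
            pow_ne_zero _ (norm_ne_zero_iff.mpr (sub_ne_zero.mpr hx))
          have hinner : ⟪b j - b i, a j - a i⟫ = (u i j + 1) * ‖a j - a i‖ ^ 2 := by
            rw [hu]; unfold uCtrl; rw [if_neg hx]; field_simp; rw [sub_add_cancel, mul_div_assoc']; exact (mul_div_cancel_left₀ _ hn).symm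
          have h1 : ⟪a j - b j, a j - a i⟫ = ⟪-(a j - b j), a i - a j⟫ := by
            rw [show a i - a j = -(a j - a i) from (neg_sub _ _).symm, inner_neg_neg]
          have h2 : ⟪a i - b i, a i - a j⟫ + ⟪a j - b j, a j - a i⟫
              = ⟪(a i - a j) - (b i - b j), a i - a j⟫ := by
            rw [h1, ← inner_add_left]
            congr 1
            abel
          have h3 : ⟪(a i - a j) - (b i - b j), a i - a j⟫
              = ‖a i - a j‖ ^ 2 - ⟪b i - b j, a i - a j⟫ := by
            rw [inner_sub_left, real_inner_self_eq_norm_sq]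
          have h4 : ⟪b i - b j, a i - a j⟫ = ⟪b j - b i, a j - a i⟫ := by
            rw [show b i - b j = -(b j - b i) from (neg_sub _ _).symm,
                show a i - a j = -(a j - a i) from (neg_sub _ _).symm, inner_neg_neg]
          have h5 : ‖a i - a j‖ ^ 2 = ‖a j - a i‖ ^ 2 := by rw [norm_sub_rev]
          have hsum : ⟪a i - b i, a i - a j⟫ + ⟪a j - b j, a j - a i⟫
              = -(u i j * ‖a j - a i‖ ^ 2) := by
            rw [h2, h3, h4, hinner, h5]; ring
          rw [← mul_add, hsum, h5]; ring
      · simp only [hf, if_neg hij, if_neg (fun h' : G.Adj j i => hij h'.symm)]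
        norm_num
    have hsum0 : ∑ i, ∑ j, (if G.Adj i j then u i j ^ 2 * ‖a i - a j‖ ^ 2 else 0) = 0 := by
      have : ∑ i, ∑ j, (f i j + f j i) = 0 := by
        rw [Finset.sum_congr rfl fun i _ => Finset.sum_add_distrib]
        rw [Finset.sum_add_distrib]
        rw [Finset.sum_comm (f := fun i j => f j i)]
        simp [hS]
      calc ∑ i, ∑ j, (if G.Adj i j then u i j ^ 2 * ‖a i - a j‖ ^ 2 else 0)
          = -∑ i, ∑ j, (f i j + f j i) := by
            rw [← Finset.sum_neg_distrib]
            refine Finset.sum_congr rfl fun i _ => ?_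
            rw [← Finset.sum_neg_distrib]
            exact Finset.sum_congr rfl fun j _ => by rw [key i j, neg_neg]
        _ = 0 := by rw [this, neg_zero]
    have hterm : ∀ i j, G.Adj i j → u i j ^ 2 * ‖a i - a j‖ ^ 2 = 0 := by
      intro i j hij
      have h1 := (Finset.sum_eq_zero_iff_of_nonneg (fun i _ => Finset.sum_nonneg
        (fun j _ => by positivity))).mp hsum0 i (mem_univ i)
      have h2 := (Finset.sum_eq_zero_iff_of_nonneg (fun j _ => by positivity)).mp h1 j (mem_univ j)
      rwa [if_pos hij] at h2
    intro i j hij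
    rcases mul_eq_zero.mp (hterm i j hij) with h' | h'
    · rw [pow_eq_zero_iff two_ne_zero] at h'
      rw [h', zero_smul]
    · rw [pow_eq_zero_iff two_ne_zero, norm_eq_zero] at h'
      rw [h', smul_zero]
  · intro h i
    exact Finset.sum_eq_zero fun j hj => h i j (by simpa using hj)
end Helpers

noncomputable def sumL (n N : ℕ) :
    (Fin N → EuclideanSpace ℝ (Fin n)) →ₗ[ℝ] EuclideanSpace ℝ (Fin n) where
  toFun a := ∑ i, a i
  map_add' a b := by simp [Finset.sum_add_distrib]
  map_smul' c a := by simp [Finset.smul_sum]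

noncomputable def diffL (n N : ℕ) (s : Finset (Fin N × Fin N)) :
    (Fin N → EuclideanSpace ℝ (Fin n)) →ₗ[ℝ] (↥s → EuclideanSpace ℝ (Fin n)) where
  toFun a e := a e.1.2 - a e.1.1
  map_add' a b := by funext e; show (a e.1.2 + b e.1.2) - (a e.1.1 + b e.1.1) = _; simp; abel
  map_smul' c a := by funext e; show c • a e.1.2 - c • a e.1.1 = _; simp [smul_sub]

/-- If `G` is a tree on `N ≥ 2` vertices, `n ≥ 1`, the target configuration has zero centroid
and distinct targets along every edge, then the set `K` of zero-centroid equilibria of the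
formation control system is homeomorphic to the product of `N - 1` copies of the unit sphere
`S^{n-1} ⊆ ℝ^n`. -/
theorem equilibria_homeomorph_spheres {n N : ℕ} (hn : 1 ≤ n) (hN : 2 ≤ N)
    (G : SimpleGraph (Fin N)) (hG : G.IsTree)
    (b : Fin N → EuclideanSpace ℝ (Fin n))
    (hb0 : ∑ i, b i = 0)
    (hbe : ∀ i j, G.Adj i j → b i ≠ b j) :
    Nonempty
      ({p : Fin N → EuclideanSpace ℝ (Fin n) // ∑ i, p i = 0 ∧ IsEquilibrium G b p} ≃ₜ
        (Fin (N - 1) → Metric.sphere (0 : EuclideanSpace ℝ (Fin n)) 1)) := by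
  classical
  set edges : Finset (Fin N × Fin N) :=
    univ.filter (fun p : Fin N × Fin N => p.1 < p.2 ∧ G.Adj p.1 p.2) with hedges
  have hcard : edges.card = N - 1 := by
    have h1 : edges.card = G.edgeFinset.card := by
      refine Finset.card_bij (fun p _ => s(p.1, p.2)) ?_ ?_ ?_
      · intro p hp
        rw [hedges, mem_filter] at hp
        rw [SimpleGraph.mem_edgeFinset, SimpleGraph.mem_edgeSet]
        exact hp.2.2
      · intro p hp q hq hpq
        rw [hedges, mem_filter] at hp hq
        rcases Sym2.eq_iff.mp hpq with ⟨ha, hb'⟩ | ⟨ha, hb'⟩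
        · exact Prod.ext ha hb'
        · exfalso
          have := hp.2.1
          rw [ha, hb'] at this
          exact absurd (this.trans hq.2.1) (lt_irrefl _)
      · intro e he
        induction e using Sym2.ind with
        | _ u v =>
          rw [SimpleGraph.mem_edgeFinset, SimpleGraph.mem_edgeSet] at he
          rcases (G.ne_of_adj he).lt_or_gt with h | h
          · exact ⟨(u, v), by simp [hedges, h, he], rfl⟩
          · exact ⟨(v, u), by simp [hedges, h, he.symm], Sym2.eq_swap⟩
    have h2 := hG.card_edgeFinset
    rw [Fintype.card_fin] at h2
    omega
  set V : Submodule ℝ (Fin N → EuclideanSpace ℝ (Fin n)) := LinearMap.ker (sumL n N) with hV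
  set L : ↥V →ₗ[ℝ] (↥edges → EuclideanSpace ℝ (Fin n)) :=
    (diffL n N edges).comp V.subtype with hL
  have hinj : Function.Injective L := by
    rw [← LinearMap.ker_eq_bot, LinearMap.ker_eq_bot']
    intro x hx
    have hdiff : ∀ e : ↥edges, x.1 e.1.2 - x.1 e.1.1 = 0 := fun e => congrFun hx e
    have hadj : ∀ i j, G.Adj i j → x.1 i = x.1 j := by
      intro i j hij
      rcases (G.ne_of_adj hij).lt_or_gt with h | h
      · have := hdiff ⟨(i, j), by simp [hedges, h, hij]⟩
        exact (sub_eq_zero.mp this).symm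
      · have := hdiff ⟨(j, i), by simp [hedges, h, hij.symm]⟩
        exact sub_eq_zero.mp this
    have hreach : ∀ i j, x.1 i = x.1 j := by
      intro i j
      refine (hG.isConnected.preconnected i j).elim fun w => ?_
      induction w with
      | nil => rfl
      | cons h p ih => exact (hadj _ _ h).trans ih
    set i0 : Fin N := ⟨0, by omega⟩
    have hsum : ∑ i, x.1 i = 0 := x.2
    have hconst : ∑ i : Fin N, x.1 i = (N : ℝ) • x.1 i0 := by
      rw [Finset.sum_congr rfl fun i _ => hreach i i0]
      simp [Finset.sum_const, Nat.cast_smul_eq_nsmul ℝ]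
    have hz : x.1 i0 = 0 := by
      have h0 : (N : ℝ) • x.1 i0 = 0 := by rw [← hconst, hsum]
      rcases smul_eq_zero.mp h0 with h | h
      · exact absurd h (by positivity)
      · exact h
    exact Subtype.ext (funext fun i => (hreach i i0).trans hz)
  have hrank : Module.finrank ℝ ↥V
      = Module.finrank ℝ (↥edges → EuclideanSpace ℝ (Fin n)) := by
    have hsurj : Function.Surjective (sumL n N) := by
      intro v
      refine ⟨fun j => if j = (⟨0, by omega⟩ : Fin N) then v else 0, ?_⟩
      show ∑ i : Fin N, (if i = (⟨0, by omega⟩ : Fin N) then v else 0) = v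
      simp
    have h1 := LinearMap.finrank_range_add_finrank_ker (sumL n N)
    rw [LinearMap.range_eq_top.mpr hsurj, finrank_top, finrank_euclideanSpace_fin] at h1
    have hdom : Module.finrank ℝ (Fin N → EuclideanSpace ℝ (Fin n)) = N * n := by
      rw [Module.finrank_pi_fintype]
      simp [finrank_euclideanSpace_fin, Finset.sum_const, mul_comm]
    have hcod : Module.finrank ℝ (↥edges → EuclideanSpace ℝ (Fin n)) = (N - 1) * n := by
      rw [Module.finrank_pi_fintype]
      simp [finrank_euclideanSpace_fin, Finset.sum_const, Fintype.card_coe, hcard, mul_comm]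
    rw [hdom] at h1
    rw [hcod, Nat.sub_one_mul, hV]
    omega
  set Ceq : ↥V ≃L[ℝ] (↥edges → EuclideanSpace ℝ (Fin n)) :=
    (LinearMap.linearEquivOfInjective L hinj hrank).toContinuousLinearEquiv with hCeqdef
  have hCeq : ∀ x : ↥V, Ceq x = L x := by
    intro x
    rw [hCeqdef]
    show (LinearMap.linearEquivOfInjective L hinj hrank).toContinuousLinearEquiv x = L x
    rw [show ((LinearMap.linearEquivOfInjective L hinj hrank).toContinuousLinearEquiv x)
        = (LinearMap.linearEquivOfInjective L hinj hrank) x from rfl,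
      LinearMap.linearEquivOfInjective_apply]
  set σ : Fin (N - 1) ≃ ↥edges :=
    (Fintype.equivFinOfCardEq (by rw [Fintype.card_coe, hcard])).symm with hσ
  set c : ↥edges → EuclideanSpace ℝ (Fin n) := fun e => b e.1.2 - b e.1.1 with hcdef
  have hadje : ∀ e : ↥edges, G.Adj e.1.1 e.1.2 :=
    fun e => (Finset.mem_filter.mp e.2).2.2
  have hc : ∀ e, c e ≠ 0 := fun e => sub_ne_zero.mpr (Ne.symm (hbe _ _ (hadje e)))
  have hcn : ∀ e, ‖c e‖ ≠ 0 := fun e => norm_ne_zero_iff.mpr (hc e)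
  have hKV : ∀ p : Fin N → EuclideanSpace ℝ (Fin n), (∑ i, p i = 0) → p ∈ V :=
    fun p hp => LinearMap.mem_ker.mpr hp
  have hK : ∀ p : Fin N → EuclideanSpace ℝ (Fin n), IsEquilibrium G b p →
      ∀ e : ↥edges, ⟪c e, p e.1.2 - p e.1.1⟫ = ‖p e.1.2 - p e.1.1‖ ^ 2 := by
    intro p hp e
    exact (uCtrl_smul_eq_zero_iff b p e.1.1 e.1.2).mp
      ((equilibrium_iff G b p).mp hp e.1.1 e.1.2 (hadje e))
  set F : {p : Fin N → EuclideanSpace ℝ (Fin n) // ∑ i, p i = 0 ∧ IsEquilibrium G b p} →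
      (Fin (N - 1) → Metric.sphere (0 : EuclideanSpace ℝ (Fin n)) 1) :=
    fun p k => ⟨‖c (σ k)‖⁻¹ • ((2:ℝ) • (p.1 (σ k).1.2 - p.1 (σ k).1.1) - c (σ k)), by
      rw [mem_sphere_zero_iff_norm, norm_smul,
        (sphere_cond (c (σ k)) _).mp (hK p.1 p.2.2 (σ k)),
        Real.norm_eq_abs, abs_inv, abs_norm]
      exact inv_mul_cancel₀ (hcn (σ k))⟩ with hF
  set w : (Fin (N - 1) → Metric.sphere (0 : EuclideanSpace ℝ (Fin n)) 1) →
      (↥edges → EuclideanSpace ℝ (Fin n)) :=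
    fun y e => (2:ℝ)⁻¹ • (‖c e‖ • (y (σ.symm e) : EuclideanSpace ℝ (Fin n)) + c e) with hwdef
  have h2w : ∀ y e, (2:ℝ) • w y e - c e
      = ‖c e‖ • (y (σ.symm e) : EuclideanSpace ℝ (Fin n)) := by
    intro y e
    rw [hwdef]
    show (2:ℝ) • ((2:ℝ)⁻¹ • (‖c e‖ • (y (σ.symm e) : EuclideanSpace ℝ (Fin n)) + c e)) - c e = _
    rw [smul_smul, show (2:ℝ) * 2⁻¹ = 1 by norm_num, one_smul, add_sub_cancel_right]
  have hwsph : ∀ y e, ⟪c e, w y e⟫ = ‖w y e‖ ^ 2 := by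
    intro y e
    rw [sphere_cond, h2w, norm_smul, Real.norm_eq_abs, abs_norm,
      mem_sphere_zero_iff_norm.mp (y (σ.symm e)).2, mul_one]
  have hFinv_edge : ∀ y (e : ↥edges),
      (Ceq.symm (w y)).1 e.1.2 - (Ceq.symm (w y)).1 e.1.1 = w y e := by
    intro y e
    have h0 : Ceq (Ceq.symm (w y)) = w y := Ceq.apply_symm_apply _
    rw [hCeq] at h0
    exact congrFun h0 e
  have hFinvK : ∀ y, (∑ i, (Ceq.symm (w y)).1 i = 0)
      ∧ IsEquilibrium G b (Ceq.symm (w y)).1 := by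
    intro y
    constructor
    · exact LinearMap.mem_ker.mp (Ceq.symm (w y)).2
    · rw [equilibrium_iff]
      intro i j hij
      rw [uCtrl_smul_eq_zero_iff]
      rcases (G.ne_of_adj hij).lt_or_gt with h | h
      · have he : (i, j) ∈ edges := by simp [hedges, h, hij]
        have h0 := hwsph y ⟨(i, j), he⟩
        rw [← hFinv_edge y ⟨(i, j), he⟩] at h0
        exact h0
      · have he : (j, i) ∈ edges := by simp [hedges, h, hij.symm]
        have h0 := hwsph y ⟨(j, i), he⟩
        rw [← hFinv_edge y ⟨(j, i), he⟩] at h0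
        exact (edgeCond_symm b (Ceq.symm (w y)).1 i j).mpr h0
  set Finv : (Fin (N - 1) → Metric.sphere (0 : EuclideanSpace ℝ (Fin n)) 1) →
      {p : Fin N → EuclideanSpace ℝ (Fin n) // ∑ i, p i = 0 ∧ IsEquilibrium G b p} :=
    fun y => ⟨(Ceq.symm (w y)).1, hFinvK y⟩ with hFinvdef
  have hleft : ∀ p, Finv (F p) = p := by
    intro p
    apply Subtype.ext
    show (Ceq.symm (w (F p))).1 = p.1
    have hwp : w (F p) = L ⟨p.1, hKV p.1 p.2.1⟩ := by
      funext e
      show (2:ℝ)⁻¹ • (‖c e‖ • ((F p) (σ.symm e) : EuclideanSpace ℝ (Fin n)) + c e) = _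
      show (2:ℝ)⁻¹ • (‖c e‖ • (‖c (σ (σ.symm e))‖⁻¹ •
        ((2:ℝ) • (p.1 (σ (σ.symm e)).1.2 - p.1 (σ (σ.symm e)).1.1) - c (σ (σ.symm e)))) + c e)
        = _
      rw [σ.apply_symm_apply e]
      rw [smul_smul, mul_inv_cancel₀ (hcn e), one_smul, sub_add_cancel, smul_smul,
        show (2:ℝ)⁻¹ * 2 = 1 by norm_num, one_smul]
      rfl
    rw [hwp, ← hCeq, Ceq.symm_apply_apply]
  have hright : ∀ y, F (Finv y) = y := by
    intro y
    funext k
    apply Subtype.ext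
    show ‖c (σ k)‖⁻¹ • ((2:ℝ) • ((Finv y).1 (σ k).1.2 - (Finv y).1 (σ k).1.1) - c (σ k))
      = (y k : EuclideanSpace ℝ (Fin n))
    rw [show (Finv y).1 = (Ceq.symm (w y)).1 from rfl]
    rw [hFinv_edge y (σ k), h2w, σ.symm_apply_apply, smul_smul,
      inv_mul_cancel₀ (hcn (σ k)), one_smul]
  have hcontF : Continuous F := by
    refine continuous_pi fun k => ?_
    refine Continuous.subtype_mk ?_ _
    have h1 : Continuous fun p :
        {p : Fin N → EuclideanSpace ℝ (Fin n) // ∑ i, p i = 0 ∧ IsEquilibrium G b p} =>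
        p.1 (σ k).1.2 - p.1 (σ k).1.1 :=
      ((continuous_apply _).comp continuous_subtype_val).sub
        ((continuous_apply _).comp continuous_subtype_val)
    exact ((h1.fun_const_smul (2:ℝ)).sub continuous_const).fun_const_smul _
  have hcontFinv : Continuous Finv := by
    refine Continuous.subtype_mk ?_ _
    refine continuous_subtype_val.comp (Ceq.symm.continuous.comp ?_)
    refine continuous_pi fun e => ?_
    exact (((continuous_subtype_val.comp (continuous_apply (σ.symm e))).fun_const_smul
      ‖c e‖).add continuous_const).fun_const_smul _
  exact ⟨⟨⟨F, Finv, hleft, hright⟩, hcontF, hcontFinv⟩⟩
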